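/- Let F : ℝ → ℝ be differentiable and strictly convex, and let X be a real-valued integrable random variable on a probability space with E[|F(X)|] < ∞. Then the constant c minimizing E[D_F(X, c)] over c ∈ ℝ is c = E[X], where D_F(x,y) := F(x) - F(y) - F'(y)(x-y). Moreover E[D_F(X,c)] = E[F(X)] - F(E[X]) + D_F(E[X], c) ≥ E[F(X)] - F(E[X]) with equality iff c = E[X]. -/

import Mathlib

open MeasureTheory

lemma bregman_pos_of_ne {F : ℝ → ℝ} (hFdiff : Differentiable ℝ F)
    (hFconv : StrictConvexOn ℝ Set.univ F) {c m : ℝ} (h : c ≠ m) :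
    0 < F m - F c - deriv F c * (m - c) := by
  rcases lt_or_gt_of_ne h with hlt | hgt
  · have := hFconv.deriv_lt_slope (Set.mem_univ c) (Set.mem_univ m) hlt
      (hFdiff c)
    rw [slope_def_field] at this
    have hmc : 0 < m - c := by linarith
    rw [lt_div_iff₀ hmc] at this
    · linarith
  · have := hFconv.slope_lt_deriv (Set.mem_univ m) (Set.mem_univ c) hgt
      (hFdiff c)
    rw [slope_def_field] at this
    have hcm : 0 < c - m := by linarith
    rw [div_lt_iff₀ hcm] at this
    · nlinarith

/-- The constant minimizing the expected scalar Bregman divergence is the mean: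
`E[D_F(X,c)] = E[F(X)] - F(E[X]) + D_F(E[X], c) ≥ E[F(X)] - F(E[X])`,
with equality iff `c = E[X]`. -/
theorem bregman_mean_minimizer {Ω : Type*} [MeasurableSpace Ω]
    (μ : Measure Ω) [IsProbabilityMeasure μ]
    (F : ℝ → ℝ) (hFdiff : Differentiable ℝ F) (hFconv : StrictConvexOn ℝ Set.univ F)
    (X : Ω → ℝ) (hX : Integrable X μ) (hFX : Integrable (fun ω => F (X ω)) μ)
    (c : ℝ) :
    (∫ ω, (F (X ω) - F c - deriv F c * (X ω - c)) ∂μ =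
        (∫ ω, F (X ω) ∂μ) - F (∫ ω, X ω ∂μ) +
          (F (∫ ω, X ω ∂μ) - F c - deriv F c * ((∫ ω, X ω ∂μ) - c))) ∧
    ((∫ ω, F (X ω) ∂μ) - F (∫ ω, X ω ∂μ) ≤
        ∫ ω, (F (X ω) - F c - deriv F c * (X ω - c)) ∂μ) ∧
    (∫ ω, (F (X ω) - F c - deriv F c * (X ω - c)) ∂μ =
        (∫ ω, F (X ω) ∂μ) - F (∫ ω, X ω ∂μ) ↔ c = ∫ ω, X ω ∂μ) := by
  set m := ∫ ω, X ω ∂μ with hm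
  have hconst : Integrable (fun _ : Ω => F c + deriv F c * c) μ := integrable_const _
  have hlin : Integrable (fun ω => deriv F c * X ω) μ := hX.const_mul _
  have key : ∫ ω, (F (X ω) - F c - deriv F c * (X ω - c)) ∂μ =
      (∫ ω, F (X ω) ∂μ) - F c - deriv F c * (m - c) := by
    have : (fun ω => F (X ω) - F c - deriv F c * (X ω - c)) =
        fun ω => (F (X ω) - deriv F c * X ω) - (F c - deriv F c * c) := by
      funext ω; ring
    have hint : Integrable (fun ω => F (X ω) - deriv F c * X ω) μ := hFX.sub hlin
    rw [this, integral_sub hint (integrable_const _),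
        integral_sub hFX hlin, integral_const, MeasureTheory.integral_const_mul]
    simp only [measure_univ, probReal_univ, ENNReal.toReal_one, one_smul, smul_eq_mul, ← hm]
    ring
  have h1 : ∫ ω, (F (X ω) - F c - deriv F c * (X ω - c)) ∂μ =
      (∫ ω, F (X ω) ∂μ) - F m + (F m - F c - deriv F c * (m - c)) := by
    rw [key]; ring
  refine ⟨h1, ?_, ?_⟩
  · rw [h1]
    rcases eq_or_ne c m with rfl | h
    · simp
    · have := bregman_pos_of_ne hFdiff hFconv h
      linarith
  · constructor
    · intro heq
      by_contra h
      have := bregman_pos_of_ne hFdiff hFconv h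
      rw [h1] at heq
      linarith
    · intro heq
      subst heq
      rw [h1]; ring
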